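/- Under the hypotheses of the previous fact, if additionally a processor from a different group computes its name from a snapshot T (comparable to both S₁ and S₂) as |T|(|T|-1)/2 + rank, with 1 ≤ rank ≤ |T|, and processors of group g compute names from S₁ and S₂ the same way, then the name computed from T differs from the names computed from S₁ and from S₂. -/
import Mathlib

lemma name_lt (a b ra rb : ℕ) (hra : 1 ≤ ra) (hra' : ra ≤ a)
    (hrb : 1 ≤ rb) (hab : a < b) :
    a * (a - 1) / 2 + ra < b * (b - 1) / 2 + rb := by
  obtain ⟨x, hx⟩ : 2 ∣ a * (a - 1) := by
    rcases Nat.even_or_odd a with h | h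
    · exact Dvd.dvd.mul_right h.two_dvd _
    · exact Dvd.dvd.mul_left (Nat.Odd.sub_odd h odd_one).two_dvd _
  obtain ⟨y, hy⟩ : 2 ∣ b * (b - 1) := by
    rcases Nat.even_or_odd b with h | h
    · exact Dvd.dvd.mul_right h.two_dvd _
    · exact Dvd.dvd.mul_left (Nat.Odd.sub_odd h odd_one).two_dvd _
  have key : a * (a + 1) ≤ (b - 1) * b :=
    Nat.mul_le_mul (by omega) (by omega)
  have ha : a * (a - 1) / 2 = x := by omega
  have hb : b * (b - 1) / 2 = y := by omega
  have h1 : a * (a - 1) + 2 * a = a * (a + 1) := by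
    match a with
    | 0 => simp
    | c + 1 => simp [Nat.add_sub_cancel]; ring
  have h2 : (b - 1) * b = b * (b - 1) := Nat.mul_comm _ _
  omega

lemma name_ne (a b ra rb : ℕ) (hra : 1 ≤ ra) (hra' : ra ≤ a)
    (hrb : 1 ≤ rb) (hrb' : rb ≤ b) (hab : a ≠ b) :
    a * (a - 1) / 2 + ra ≠ b * (b - 1) / 2 + rb := by
  rcases lt_or_gt_of_ne hab with h | h
  · exact Nat.ne_of_lt (name_lt a b ra rb hra hra' hrb h)
  · exact (Nat.ne_of_lt (name_lt b a rb ra hrb hrb' hra h)).symm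

/-- With `S₁, S₂` incomparable snapshots containing `g` and `T` comparable to both,
names computed as `|·|(|·|-1)/2 + rank` from `T` differ from those from `S₁` and `S₂`. -/
theorem stmt_5 {α : Type*} [DecidableEq α] (S₁ S₂ T : Finset α) (g : α)
    (hg₁ : g ∈ S₁) (hg₂ : g ∈ S₂)
    (hinc₁ : ¬ S₁ ⊆ S₂) (hinc₂ : ¬ S₂ ⊆ S₁)
    (hT₁ : T ⊆ S₁ ∨ S₁ ⊆ T) (hT₂ : T ⊆ S₂ ∨ S₂ ⊆ T)
    (rT r₁ r₂ : ℕ)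
    (hrT : 1 ≤ rT) (hrT' : rT ≤ T.card)
    (hr₁ : 1 ≤ r₁) (hr₁' : r₁ ≤ S₁.card)
    (hr₂ : 1 ≤ r₂) (hr₂' : r₂ ≤ S₂.card) :
    T.card * (T.card - 1) / 2 + rT ≠ S₁.card * (S₁.card - 1) / 2 + r₁ ∧
    T.card * (T.card - 1) / 2 + rT ≠ S₂.card * (S₂.card - 1) / 2 + r₂ := by
  have h1 : T.card ≠ S₁.card ∧ T.card ≠ S₂.card := by
    rcases hT₁ with h₁ | h₁ <;> rcases hT₂ with h₂ | h₂
    · have hs₁ : T ⊂ S₁ := ⟨h₁, fun hsub => hinc₁ (hsub.trans h₂)⟩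
      have hs₂ : T ⊂ S₂ := ⟨h₂, fun hsub => hinc₂ (hsub.trans h₁)⟩
      exact ⟨Nat.ne_of_lt (Finset.card_lt_card hs₁),
        Nat.ne_of_lt (Finset.card_lt_card hs₂)⟩
    · exact absurd (h₂.trans h₁) hinc₂
    · exact absurd (h₁.trans h₂) hinc₁
    · have hs₁ : S₁ ⊂ T := ⟨h₁, fun hsub => hinc₂ (h₂.trans hsub)⟩
      have hs₂ : S₂ ⊂ T := ⟨h₂, fun hsub => hinc₁ (h₁.trans hsub)⟩
      exact ⟨(Nat.ne_of_lt (Finset.card_lt_card hs₁)).symm,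
        (Nat.ne_of_lt (Finset.card_lt_card hs₂)).symm⟩
  exact ⟨name_ne _ _ _ _ hrT hrT' hr₁ hr₁' h1.1,
    name_ne _ _ _ _ hrT hrT' hr₂ hr₂' h1.2⟩
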